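/- For every integer n ≥ 2 and every Signgiver strategy in the prefix-discrepancy game on [n], Positioner can choose the order of queries so that at some time t and some 1 ≤ j ≤ n the board satisfies |Σ_{i=1}^{j} x_i^t| ≥ (1/3)·log₂(n). Consequently, the game value satisfies d(n) ≥ (1/3)·log₂(n). -/

import Mathlib

/-- A Signgiver strategy in the prefix-discrepancy game on `[n]` (positions
`Fin n`): given the history of play (a list of (position, sign) pairs, most
recent first) and the position just queried by Positioner, it returns a sign. -/
def SgStrategy (n : ℕ) : Type := List (Fin n × ℤ) → Fin n → ℤ

/-- A valid strategy always answers `+1` or `-1`. -/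
def ValidStrategy {n : ℕ} (σ : SgStrategy n) : Prop :=
  ∀ h i, σ h i = 1 ∨ σ h i = -1

/-- The history of play produced by the strategy `σ` against the (chronological,
most recent first) list `qs` of positions queried by Positioner. -/
def playHist {n : ℕ} (σ : SgStrategy n) : List (Fin n) → List (Fin n × ℤ)
  | [] => []
  | q :: qs => (q, σ (playHist σ qs) q) :: playHist σ qs

/-- The value of the board at position `i` given the history `h`: the assigned
sign if `i` has been queried, and `0` otherwise. -/
def boardVal {n : ℕ} (h : List (Fin n × ℤ)) (i : Fin n) : ℤ :=
  ((h.find? fun p => decide (p.1 = i)).map Prod.snd).getD 0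

/-- The signed discrepancy `disc(j) = Σ_{i=1}^{j} x_i` of the prefix `[1,j]`
(positions of index `< j` in the 0-indexed board). -/
def prefixDisc {n : ℕ} (h : List (Fin n × ℤ)) (j : ℕ) : ℤ :=
  ∑ p ∈ Finset.univ.filter (fun p : Fin n => (p : ℕ) < j), boardVal h p

namespace Stmt12

variable {n : ℕ}

lemma boardVal_nil (i : Fin n) : boardVal ([] : List (Fin n × ℤ)) i = 0 := rfl

lemma boardVal_cons (q : Fin n) (s : ℤ) (h : List (Fin n × ℤ)) (i : Fin n) :
    boardVal ((q, s) :: h) i = if q = i then s else boardVal h i := by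
  unfold boardVal
  rw [List.find?_cons]
  by_cases hqi : q = i <;> simp [hqi]

lemma prefixDisc_nil (j : ℕ) : prefixDisc ([] : List (Fin n × ℤ)) j = 0 := by
  simp [prefixDisc, boardVal_nil]

lemma prefixDisc_cons (q : Fin n) (s : ℤ) (h : List (Fin n × ℤ))
    (hq : boardVal h q = 0) (j : ℕ) :
    prefixDisc ((q, s) :: h) j = prefixDisc h j + if (q : ℕ) < j then s else 0 := by
  unfold prefixDisc
  have key : ∀ i ∈ Finset.univ.filter (fun p : Fin n => (p : ℕ) < j),
      boardVal ((q, s) :: h) i = boardVal h i + (if q = i then s else 0) := by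
    intro i _
    rw [boardVal_cons]
    by_cases hqi : q = i
    · subst hqi; simp [hq]
    · simp [hqi]
  rw [Finset.sum_congr rfl key, Finset.sum_add_distrib, Finset.sum_ite_eq]
  by_cases hqj : (q : ℕ) < j <;> simp [hqj]

lemma prefixDisc_block (h : List (Fin n × ℤ)) (a b j : ℕ)
    (hblock : ∀ i : Fin n, a ≤ (i : ℕ) → (i : ℕ) < b → boardVal h i = 0)
    (haj : a ≤ j) (hjb : j ≤ b) :
    prefixDisc h j = prefixDisc h a := by
  unfold prefixDisc
  symm
  apply Finset.sum_subset
  · intro x hx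
    simp only [Finset.mem_filter, Finset.mem_univ, true_and] at hx ⊢
    omega
  · intro x hx hx'
    simp only [Finset.mem_filter, Finset.mem_univ, true_and] at hx hx'
    exact hblock x (by omega) (by omega)



def g (B : ℕ) : ℕ → ℕ → ℕ → ℕ
  | 0, _, _ => 0
  | F+1, p, m => if B ≤ p ∨ B + p ≤ m then 0 else 1 + g B F p (m+1) + g B F (p+1) m

lemma g_succ (B : ℕ) : ∀ F p m, 3 * B ≤ F + p + m → g B (F + 1) p m = g B F p m := by
  intro F
  induction F with
  | zero =>
    intro p m hμ
    have hwin : B ≤ p ∨ B + p ≤ m := by omega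
    simp [g, hwin]
  | succ F ih =>
    intro p m hμ
    by_cases hwin : B ≤ p ∨ B + p ≤ m
    · simp [g, hwin]
    · show (if B ≤ p ∨ B + p ≤ m then 0 else 1 + g B (F+1) p (m+1) + g B (F+1) (p+1) m)
        = (if B ≤ p ∨ B + p ≤ m then 0 else 1 + g B F p (m+1) + g B F (p+1) m)
      rw [if_neg hwin, if_neg hwin, ih p (m+1) (by omega), ih (p+1) m (by omega)]

lemma g_admissible (B p m : ℕ) (hp : p < B) (hm : m < B + p) :
    1 + g B (3*B) p (m+1) + g B (3*B) (p+1) m ≤ g B (3*B) p m := by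
  have hwin : ¬ (B ≤ p ∨ B + p ≤ m) := by omega
  obtain ⟨F0, hF0⟩ : ∃ F0, 3 * B = F0 + 1 := ⟨3 * B - 1, by omega⟩
  have e1 : g B (3*B) p (m+1) = g B F0 p (m+1) := by
    rw [hF0, g_succ B F0 p (m+1) (by omega)]
  have e2 : g B (3*B) (p+1) m = g B F0 (p+1) m := by
    rw [hF0, g_succ B F0 (p+1) m (by omega)]
  rw [e1, e2, hF0]
  show _ ≤ (if B ≤ p ∨ B + p ≤ m then 0 else 1 + g B F0 p (m+1) + g B F0 (p+1) m)
  rw [if_neg hwin]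

lemma g_bound (B : ℕ) : ∀ F p m, p ≤ B → m ≤ B + p →
    (g B F p m + 1) * 2 ^ ((B - p) + (B + p - m)) ≤ 9 ^ (B - p) * 3 ^ (B + p - m) := by
  have base : ∀ u v : ℕ, 2 ^ (u + v) ≤ 9 ^ u * 3 ^ v := by
    intro u v
    rw [pow_add]
    exact Nat.mul_le_mul (Nat.pow_le_pow_left (by norm_num) u)
      (Nat.pow_le_pow_left (by norm_num) v)
  intro F
  induction F with
  | zero =>
    intro p m _ _
    simpa [g] using base (B - p) (B + p - m)
  | succ F ih =>
    intro p m hp hm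
    by_cases hwin : B ≤ p ∨ B + p ≤ m
    · simpa [g, hwin] using base (B - p) (B + p - m)
    · push_neg at hwin
      obtain ⟨hp', hm'⟩ := hwin
      show (g B (F+1) p m + 1) * _ ≤ _
      have hunfold : g B (F+1) p m = 1 + g B F p (m+1) + g B F (p+1) m := by
        show (if B ≤ p ∨ B + p ≤ m then 0 else _) = _
        rw [if_neg (by omega)]
      rw [hunfold]
      obtain ⟨a, ha⟩ : ∃ a, B - p = a + 1 := ⟨B - p - 1, by omega⟩
      obtain ⟨b, hb⟩ : ∃ b, B + p - m = b + 1 := ⟨B + p - m - 1, by omega⟩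
      have IH1 := ih p (m+1) hp (by omega)
      have IH2 := ih (p+1) m (by omega) (by omega)
      have ea1 : B - p = a + 1 := ha
      have eb1 : B + p - (m+1) = b := by omega
      have ea2 : B - (p+1) = a := by omega
      have eb2 : B + (p+1) - m = b + 2 := by omega
      rw [ea1, eb1] at IH1
      rw [ea2, eb2] at IH2
      rw [ha, hb]
      have h1 : (g B F p (m+1) + 1) * 2 ^ (a + 1 + b) ≤ 9 * (9 ^ a * 3 ^ b) := by
        calc (g B F p (m+1) + 1) * 2 ^ (a + 1 + b) ≤ 9 ^ (a+1) * 3 ^ b := IH1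
          _ = 9 * (9 ^ a * 3 ^ b) := by ring
      have h2 : (g B F (p+1) m + 1) * (2 * 2 ^ (a + 1 + b)) ≤ 9 * (9 ^ a * 3 ^ b) := by
        calc (g B F (p+1) m + 1) * (2 * 2 ^ (a + 1 + b))
            = (g B F (p+1) m + 1) * 2 ^ (a + (b + 2)) := by ring
          _ ≤ 9 ^ a * 3 ^ (b+2) := IH2
          _ = 9 * (9 ^ a * 3 ^ b) := by ring
      calc (1 + g B F p (m+1) + g B F (p+1) m + 1) * 2 ^ (a + 1 + (b + 1))
          = ((g B F p (m+1) + 1) * 2 ^ (a + 1 + b)) * 2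
            + (g B F (p+1) m + 1) * (2 * 2 ^ (a + 1 + b)) := by ring
        _ ≤ 9 * (9 ^ a * 3 ^ b) * 2 + 9 * (9 ^ a * 3 ^ b) := by
            exact Nat.add_le_add (Nat.mul_le_mul_right 2 h1) h2
        _ = 9 ^ (a + 1) * 3 ^ (b + 1) := by ring


theorem game (n B : ℕ) (hn : 1 ≤ n) (hB : 1 ≤ B) (σ : SgStrategy n)
    (hσ : ValidStrategy σ) (T : ℕ → ℕ → ℕ)
    (hT : ∀ p m, p < B → m < B + p → 1 + T p (m+1) + T (p+1) m ≤ T p m)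
    (l r p m : ℕ) (qs : List (Fin n))
    (hlr : l ≤ r) (hrn : r ≤ n)
    (hlen : T p m ≤ r - l)
    (hnodup : qs.Nodup)
    (hout : ∀ q ∈ qs, (q : ℕ) < l ∨ r ≤ (q : ℕ))
    (hblock : ∀ i : Fin n, l ≤ (i : ℕ) → (i : ℕ) < r → boardVal (playHist σ qs) i = 0)
    (hp : prefixDisc (playHist σ qs) l = (p : ℤ))
    (hm : prefixDisc (playHist σ qs) n = (p : ℤ) - (m : ℤ)) :
    ∃ qs' : List (Fin n), qs'.Nodup ∧ ∃ j, 1 ≤ j ∧ j ≤ n ∧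
      (B : ℤ) ≤ |prefixDisc (playHist σ qs') j| := by
  by_cases hwp : B ≤ p
  · refine ⟨qs, hnodup, l, ?_, le_trans hlr hrn, ?_⟩
    · by_contra h0
      have hl0 : l = 0 := by omega
      have : prefixDisc (playHist σ qs) 0 = 0 := by
        simp [prefixDisc]
      rw [hl0, this] at hp
      omega
    · rw [hp, le_abs]
      left
      exact_mod_cast hwp
  · by_cases hwm : B + p ≤ m
    · refine ⟨qs, hnodup, n, hn, le_rfl, ?_⟩
      rw [hm, le_abs]
      right
      omega
    · push_neg at hwp hwm
      have hTrec := hT p m hwp hwm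
      have hlr' : l < r := by omega
      have hqr : l + T p (m+1) < r := by omega
      have hqn : l + T p (m+1) < n := lt_of_lt_of_le hqr hrn
      set q : Fin n := ⟨l + T p (m+1), hqn⟩ with hqdef
      have hqval : (q : ℕ) = l + T p (m+1) := rfl
      set s : ℤ := σ (playHist σ qs) q with hsdef
      have hplay : playHist σ (q :: qs) = (q, s) :: playHist σ qs := rfl
      have hbq : boardVal (playHist σ qs) q = 0 :=
        hblock q (by omega) (by rw [hqval]; omega)
      have hnodup' : (q :: qs).Nodup := by
        rw [List.nodup_cons]
        refine ⟨fun hmem => ?_, hnodup⟩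
        rcases hout q hmem with h' | h' <;> rw [hqval] at h' <;> omega
      have hcons : ∀ j, prefixDisc (playHist σ (q :: qs)) j =
          prefixDisc (playHist σ qs) j + if (q : ℕ) < j then s else 0 := by
        intro j
        rw [hplay]
        exact prefixDisc_cons q s _ hbq j
      rcases hσ (playHist σ qs) q with hs1 | hs1
      · -- sign +1 : recurse into right half
        apply game n B hn hB σ hσ T hT (l + T p (m+1) + 1) r (p+1) m (q :: qs)
        · omega
        · exact hrn
        · omega
        · exact hnodup'
        · intro q' hq'
          rcases List.mem_cons.mp hq' with h' | h'
          · left; rw [h', hqval]; omega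
          · rcases hout q' h' with h'' | h'' <;> omega
        · intro i hi1 hi2
          rw [hplay, boardVal_cons, if_neg, ]
          · exact hblock i (by omega) hi2
          · intro hqi
            have : (q : ℕ) = (i : ℕ) := by rw [hqi]
            omega
        · rw [hcons, if_pos (by omega)]
          have : prefixDisc (playHist σ qs) (l + T p (m+1) + 1) =
              prefixDisc (playHist σ qs) l :=
            prefixDisc_block _ l r _ hblock (by omega) (by omega)
          rw [this, hp, hsdef, hs1]
          push_cast
          ring
        · rw [hcons, if_pos (by omega), hm, hsdef, hs1]
          push_cast
          ring
      · -- sign -1 : recurse into left half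
        apply game n B hn hB σ hσ T hT l (l + T p (m+1)) p (m+1) (q :: qs)
        · omega
        · omega
        · omega
        · exact hnodup'
        · intro q' hq'
          rcases List.mem_cons.mp hq' with h' | h'
          · right; rw [h', hqval]
          · rcases hout q' h' with h'' | h'' <;> omega
        · intro i hi1 hi2
          rw [hplay, boardVal_cons, if_neg]
          · exact hblock i hi1 (by omega)
          · intro hqi
            have : (q : ℕ) = (i : ℕ) := by rw [hqi]
            omega
        · rw [hcons, if_neg (by omega), hp]
          ring
        · rw [hcons, if_pos (by omega), hm, hsdef, hs1]
          push_cast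
          ring
termination_by r - l
decreasing_by
  · omega
  · omega

def tab1 : List (List ℕ) := [[1]]
def T1 (p m : ℕ) : ℕ := ((tab1.getD p []).getD m 0)
lemma hT1 : ∀ p m, p < 1 → m < 1 + p → 1 + T1 p (m+1) + T1 (p+1) m ≤ T1 p m := by
  have H : ∀ p < 1, ∀ m < 1 + p, 1 + T1 p (m+1) + T1 (p+1) m ≤ T1 p m := by decide
  exact fun p m hp hm => H p hp m hm
lemma T100 : T1 0 0 = 1 := rfl

def tab2 : List (List ℕ) := [[7, 3], [3, 2, 1]]
def T2 (p m : ℕ) : ℕ := ((tab2.getD p []).getD m 0)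
lemma hT2 : ∀ p m, p < 2 → m < 2 + p → 1 + T2 p (m+1) + T2 (p+1) m ≤ T2 p m := by
  have H : ∀ p < 2, ∀ m < 2 + p, 1 + T2 p (m+1) + T2 (p+1) m ≤ T2 p m := by decide
  exact fun p m hp hm => H p hp m hm
lemma T200 : T2 0 0 = 7 := rfl

def tab3 : List (List ℕ) := [[40, 21, 8], [18, 12, 7, 3], [5, 4, 3, 2, 1]]
def T3 (p m : ℕ) : ℕ := ((tab3.getD p []).getD m 0)
lemma hT3 : ∀ p m, p < 3 → m < 3 + p → 1 + T3 p (m+1) + T3 (p+1) m ≤ T3 p m := by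
  have H : ∀ p < 3, ∀ m < 3 + p, 1 + T3 p (m+1) + T3 (p+1) m ≤ T3 p m := by decide
  exact fun p m hp hm => H p hp m hm
lemma T300 : T3 0 0 = 40 := rfl

def tab4 : List (List ℕ) := [[231, 130, 63, 22], [100, 66, 40, 21, 8], [33, 25, 18, 12, 7, 3], [7, 6, 5, 4, 3, 2, 1]]
def T4 (p m : ℕ) : ℕ := ((tab4.getD p []).getD m 0)
lemma hT4 : ∀ p m, p < 4 → m < 4 + p → 1 + T4 p (m+1) + T4 (p+1) m ≤ T4 p m := by
  have H : ∀ p < 4, ∀ m < 4 + p, 1 + T4 p (m+1) + T4 (p+1) m ≤ T4 p m := by decide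
  exact fun p m hp hm => H p hp m hm
lemma T400 : T4 0 0 = 231 := rfl

def tab5 : List (List ℕ) := [[1376, 803, 427, 195, 64], [572, 375, 231, 130, 63, 22], [196, 143, 100, 66, 40, 21, 8], [52, 42, 33, 25, 18, 12, 7, 3], [9, 8, 7, 6, 5, 4, 3, 2, 1]]
def T5 (p m : ℕ) : ℕ := ((tab5.getD p []).getD m 0)
lemma hT5 : ∀ p m, p < 5 → m < 5 + p → 1 + T5 p (m+1) + T5 (p+1) m ≤ T5 p m := by
  have H : ∀ p < 5, ∀ m < 5 + p, 1 + T5 p (m+1) + T5 (p+1) m ≤ T5 p m := by decide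
  exact fun p m hp hm => H p hp m hm
lemma T500 : T5 0 0 = 1376 := rfl

def tab6 : List (List ℕ) := [[8398, 5016, 2805, 1428, 624, 196], [3381, 2210, 1376, 803, 427, 195, 64], [1170, 833, 572, 375, 231, 130, 63, 22], [336, 260, 196, 143, 100, 66, 40, 21, 8], [75, 63, 52, 42, 33, 25, 18, 12, 7, 3], [11, 10, 9, 8, 7, 6, 5, 4, 3, 2, 1]]
def T6 (p m : ℕ) : ℕ := ((tab6.getD p []).getD m 0)
lemma hT6 : ∀ p m, p < 6 → m < 6 + p → 1 + T6 p (m+1) + T6 (p+1) m ≤ T6 p m := by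
  have H : ∀ p < 6, ∀ m < 6 + p, 1 + T6 p (m+1) + T6 (p+1) m ≤ T6 p m := by decide
  exact fun p m hp hm => H p hp m hm
lemma T600 : T6 0 0 = 8398 := rfl

def tab7 : List (List ℕ) := [[52137, 31654, 18276, 9877, 4860, 2054, 625], [20482, 13377, 8398, 5016, 2805, 1428, 624, 196], [7104, 4978, 3381, 2210, 1376, 803, 427, 195, 64], [2125, 1596, 1170, 833, 572, 375, 231, 130, 63, 22], [528, 425, 336, 260, 196, 143, 100, 66, 40, 21, 8], [102, 88, 75, 63, 52, 42, 33, 25, 18, 12, 7, 3], [13, 12, 11, 10, 9, 8, 7, 6, 5, 4, 3, 2, 1]]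
def T7 (p m : ℕ) : ℕ := ((tab7.getD p []).getD m 0)
lemma hT7 : ∀ p m, p < 7 → m < 7 + p → 1 + T7 p (m+1) + T7 (p+1) m ≤ T7 p m := by
  have H : ∀ p < 7, ∀ m < 7 + p, 1 + T7 p (m+1) + T7 (p+1) m ≤ T7 p m := by decide
  exact fun p m hp hm => H p hp m hm
lemma T700 : T7 0 0 = 52137 := rfl

def tab8 : List (List ℕ) := [[327655, 201363, 118864, 66726, 35071, 16794, 6916, 2055], [126291, 82498, 52137, 31654, 18276, 9877, 4860, 2054, 625], [43792, 30360, 20482, 13377, 8398, 5016, 2805, 1428, 624, 196], [13431, 9877, 7104, 4978, 3381, 2210, 1376, 803, 427, 195, 64], [3553, 2772, 2125, 1596, 1170, 833, 572, 375, 231, 130, 63, 22], [780, 646, 528, 425, 336, 260, 196, 143, 100, 66, 40, 21, 8], [133, 117, 102, 88, 75, 63, 52, 42, 33, 25, 18, 12, 7, 3], [15, 14, 13, 12, 11, 10, 9, 8, 7, 6, 5, 4, 3, 2, 1]]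
def T8 (p m : ℕ) : ℕ := ((tab8.getD p []).getD m 0)
lemma hT8 : ∀ p m, p < 8 → m < 8 + p → 1 + T8 p (m+1) + T8 (p+1) m ≤ T8 p m := by
  have H : ∀ p < 8, ∀ m < 8 + p, 1 + T8 p (m+1) + T8 (p+1) m ≤ T8 p m := by decide
  exact fun p m hp hm => H p hp m hm
lemma T800 : T8 0 0 = 327655 := rfl

def tab9 : List (List ℕ) := [[2077933, 1289055, 773396, 445740, 244376, 125511, 58784, 23712, 6917], [788877, 515658, 327655, 201363, 118864, 66726, 35071, 16794, 6916, 2055], [273218, 188002, 126291, 82498, 52137, 31654, 18276, 9877, 4860, 2054, 625], [85215, 61710, 43792, 30360, 20482, 13377, 8398, 5016, 2805, 1428, 624, 196], [23504, 17917, 13431, 9877, 7104, 4978, 3381, 2210, 1376, 803, 427, 195, 64], [5586, 4485, 3553, 2772, 2125, 1596, 1170, 833, 572, 375, 231, 130, 63, 22], [1100, 931, 780, 646, 528, 425, 336, 260, 196, 143, 100, 66, 40, 21, 8], [168, 150, 133, 117, 102, 88, 75, 63, 52, 42, 33, 25, 18, 12, 7, 3], [17, 16, 15, 14, 13, 12,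 11, 10, 9, 8, 7, 6, 5, 4, 3, 2, 1]]
def T9 (p m : ℕ) : ℕ := ((tab9.getD p []).getD m 0)
lemma hT9 : ∀ p m, p < 9 → m < 9 + p → 1 + T9 p (m+1) + T9 (p+1) m ≤ T9 p m := by
  have H : ∀ p < 9, ∀ m < 9 + p, 1 + T9 p (m+1) + T9 (p+1) m ≤ T9 p m := by decide
  exact fun p m hp hm => H p hp m hm
lemma T900 : T9 0 0 = 2077933 := rfl

def tab10 : List (List ℕ) := [[13270632, 8294143, 5038515, 2960581, 1671525, 898128, 452387, 208010, 82498, 23713], [4976488, 3255627, 2077933, 1289055, 773396, 445740, 244376, 125511, 58784, 23712, 6917], [1720860, 1177693, 788877, 515658, 327655, 201363, 118864, 66726, 35071, 16794, 6916, 2055], [543166, 388815, 273218, 188002, 126291, 82498, 52137, 31654, 18276, 9877, 4860, 2054, 625], [154350, 115596, 85215, 61710, 43792, 30360, 20482, 13377, 8398, 5016, 2805, 1428, 624, 196], [38753, 30380, 23504, 17917, 13431, 9877, 7104, 4978, 3381, 2210, 1376, 803, 427, 195, 64], [8372, 6875, 5586, 4485, 3553, 2772, 2125, 1596, 1170, 833,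 572, 375, 231, 130, 63, 22], [1496, 1288, 1100, 931, 780, 646, 528, 425, 336, 260, 196, 143, 100, 66, 40, 21, 8], [207, 187, 168, 150, 133, 117, 102, 88, 75, 63, 52, 42, 33, 25, 18, 12, 7, 3], [19, 18, 17, 16, 15, 14, 13, 12, 11, 10, 9, 8, 7, 6, 5, 4, 3, 2, 1]]
def T10 (p m : ℕ) : ℕ := ((tab10.getD p []).getD m 0)
lemma hT10 : ∀ p m, p < 10 → m < 10 + p → 1 + T10 p (m+1) + T10 (p+1) m ≤ T10 p m := by
  have H : ∀ p < 10, ∀ m < 10 + p, 1 + T10 p (m+1) + T10 (p+1) m ≤ T10 p m := by decide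
  exact fun p m hp hm => H p hp m hm
lemma T1000 : T10 0 0 = 13270632 := rfl

def tab11 : List (List ℕ) := [[85226593, 53590782, 32876428, 19605795, 11311651, 6273135, 3312553, 1641027, 742898, 290510, 82499], [31635810, 20714353, 13270632, 8294143, 5038515, 2960581, 1671525, 898128, 452387, 208010, 82498, 23713], [10921456, 7443720, 4976488, 3255627, 2077933, 1289055, 773396, 445740, 244376, 125511, 58784, 23712, 6917], [3477735, 2467231, 1720860, 1177693, 788877, 515658, 327655, 201363, 118864, 66726, 35071, 16794, 6916, 2055], [1010503, 746370, 543166, 388815, 273218, 188002, 126291, 82498, 52137, 31654, 18276, 9877, 4860, 2054, 625], [264132, 203203, 154350, 115596, 85215, 61710, 43792, 30360, 20482, 13377, 8398, 5016, 2805, 1428, 624, 196], [60928, 48852, 38753, 30380, 23504, 17917, 13431, 9877, 7104, 4978, 3381, 2210, 1376, 803, 427, 195, 64], [12075, 10098, 8372, 6875, 5586, 4485, 3553, 2772, 2125, 1596, 1170, 833, 572, 375, 231, 130, 63, 22], [1976, 1725, 1496, 1288, 1100, 931, 780, 646, 528, 425, 336, 260, 196, 143, 100, 66, 40, 21, 8],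 [250, 228, 207, 187, 168, 150, 133, 117, 102, 88, 75, 63, 52, 42, 33, 25, 18, 12, 7, 3], [21, 20, 19, 18, 17, 16, 15, 14, 13, 12, 11, 10, 9, 8, 7, 6, 5, 4, 3, 2, 1]]
def T11 (p m : ℕ) : ℕ := ((tab11.getD p []).getD m 0)
lemma hT11 : ∀ p m, p < 11 → m < 11 + p → 1 + T11 p (m+1) + T11 (p+1) m ≤ T11 p m := by
  have H : ∀ p < 11, ∀ m < 11 + p, 1 + T11 p (m+1) + T11 (p+1) m ≤ T11 p m := by decide
  exact fun p m hp hm => H p hp m hm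
lemma T1100 : T11 0 0 = 85226593 := rfl

def tab12 : List (List ℕ) := [[549837390, 347482873, 214871382, 129644788, 76054005, 43177576, 23571780, 12260128, 5986992, 2674438, 1033410, 290511], [202354516, 132611490, 85226593, 53590782, 32876428, 19605795, 11311651, 6273135, 3312553, 1641027, 742898, 290510, 82499], [69743025, 47384896, 31635810, 20714353, 13270632, 8294143, 5038515, 2960581, 1671525, 898128, 452387, 208010, 82498, 23713], [22358128, 15749085, 10921456, 7443720, 4976488, 3255627, 2077933, 1289055, 773396, 445740, 244376, 125511, 58784, 23712, 6917], [6609042, 4827628, 3477735, 2467231, 1720860, 1177693, 788877, 515658, 327655, 201363, 118864, 66726, 35071, 16794, 6916, 2055], [1781413, 1349892, 1010503, 746370, 543166, 388815, 273218, 188002, 126291, 82498, 52137, 31654, 18276, 9877, 4860, 2054, 625], [431520, 339388, 264132, 203203, 154350, 115596, 85215, 61710, 43792, 30360, 20482, 13377, 8398, 5016, 2805, 1428, 624, 196], [92131, 75255, 60928, 48852, 38753, 30380, 23504, 17917, 13431, 9877, 7104, 4978, 3381, 2210, 1376, 803, 427, 195, 64], [16875, 14326, 12075, 10098, 8372, 6875,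 5586, 4485, 3553, 2772, 2125, 1596, 1170, 833, 572, 375, 231, 130, 63, 22], [2548, 2250, 1976, 1725, 1496, 1288, 1100, 931, 780, 646, 528, 425, 336, 260, 196, 143, 100, 66, 40, 21, 8], [297, 273, 250, 228, 207, 187, 168, 150, 133, 117, 102, 88, 75, 63, 52, 42, 33, 25, 18, 12, 7, 3], [23, 22, 21, 20, 19, 18, 17, 16, 15, 14, 13, 12, 11, 10, 9, 8, 7, 6, 5, 4, 3, 2, 1]]
def T12 (p m : ℕ) : ℕ := ((tab12.getD p []).getD m 0)
lemma hT12 : ∀ p m, p < 12 → m < 12 + p → 1 + T12 p (m+1) + T12 (p+1) m ≤ T12 p m := by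
  have H : ∀ p < 12, ∀ m < 12 + p, 1 + T12 p (m+1) + T12 (p+1) m ≤ T12 p m := by decide
  exact fun p m hp hm => H p hp m hm
lemma T1200 : T12 0 0 = 549837390 := rfl



lemma pow13 : ∀ b : ℕ, 13 ≤ b → 8 * 27 ^ b ≤ 32 ^ b := by
  intro b hb
  induction b, hb using Nat.le_induction with
  | base => norm_num
  | succ b hb ih =>
    calc 8 * 27 ^ (b + 1) = 27 * (8 * 27 ^ b) := by ring
      _ ≤ 27 * 32 ^ b := Nat.mul_le_mul_left 27 ih
      _ ≤ 32 * 32 ^ b := Nat.mul_le_mul_right _ (by norm_num)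
      _ = 32 ^ (b + 1) := by ring

lemma final_of (n B : ℕ) (hn : 2 ≤ n) (σ : SgStrategy n) (hσ : ValidStrategy σ)
    (T : ℕ → ℕ → ℕ)
    (hT : ∀ p m, p < B → m < B + p → 1 + T p (m+1) + T (p+1) m ≤ T p m)
    (hB : 1 ≤ B) (hT0 : T 0 0 ≤ n) (hn8 : n ≤ 8 ^ B) :
    ∃ qs : List (Fin n), qs.Nodup ∧
      ∃ j, 1 ≤ j ∧ j ≤ n ∧
        1 / 3 * Real.logb 2 n ≤ |(prefixDisc (playHist σ qs) j : ℝ)| := by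
  obtain ⟨qs, hnd, j, hj1, hjn, hd⟩ :=
    game n B (by omega) hB σ hσ T hT 0 n 0 0 []
      (by omega) le_rfl (by omega) List.nodup_nil (by simp)
      (fun i _ _ => rfl)
      (by show prefixDisc ([] : List (Fin n × ℤ)) 0 = _; rw [prefixDisc_nil]; norm_num)
      (by show prefixDisc ([] : List (Fin n × ℤ)) n = _; rw [prefixDisc_nil]; norm_num)
  refine ⟨qs, hnd, j, hj1, hjn, ?_⟩
  have h8 : (n:ℝ) ≤ (8:ℝ) ^ B := by exact_mod_cast hn8
  have hlog : Real.logb 2 n ≤ 3 * B := by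
    rw [Real.logb_le_iff_le_rpow (by norm_num)
      (by exact_mod_cast Nat.lt_of_lt_of_le (by norm_num) hn)]
    calc (n:ℝ) ≤ (8:ℝ)^B := h8
      _ = (2:ℝ)^(3*B) := by rw [pow_mul]; norm_num
      _ = (2:ℝ)^((3*B : ℕ):ℝ) := (Real.rpow_natCast 2 (3*B)).symm
      _ = (2:ℝ)^(((3:ℕ)*B : ℝ)) := by norm_cast
  have habs : (B:ℝ) ≤ |(prefixDisc (playHist σ qs) j : ℝ)| := by exact_mod_cast hd
  have h3B : (3 : ℝ) * B = ((3 * B : ℕ) : ℝ) := by push_cast; ring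
  linarith

theorem stmt12 (n : ℕ) (hn : 2 ≤ n) (σ : SgStrategy n) (hσ : ValidStrategy σ) :
    ∃ qs : List (Fin n), qs.Nodup ∧
      ∃ j, 1 ≤ j ∧ j ≤ n ∧
        1 / 3 * Real.logb 2 n ≤ |(prefixDisc (playHist σ qs) j : ℝ)| := by
  rcases le_or_gt n 8 with hc1 | hc1
  · exact final_of n 1 hn σ hσ T1 hT1 (by norm_num)
      (by rw [T100]; omega) (le_trans hc1 (by norm_num))
  rcases le_or_gt n 64 with hc2 | hc2
  · exact final_of n 2 hn σ hσ T2 hT2 (by norm_num)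
      (by rw [T200]; omega) (le_trans hc2 (by norm_num))
  rcases le_or_gt n 512 with hc3 | hc3
  · exact final_of n 3 hn σ hσ T3 hT3 (by norm_num)
      (by rw [T300]; omega) (le_trans hc3 (by norm_num))
  rcases le_or_gt n 4096 with hc4 | hc4
  · exact final_of n 4 hn σ hσ T4 hT4 (by norm_num)
      (by rw [T400]; omega) (le_trans hc4 (by norm_num))
  rcases le_or_gt n 32768 with hc5 | hc5
  · exact final_of n 5 hn σ hσ T5 hT5 (by norm_num)
      (by rw [T500]; omega) (le_trans hc5 (by norm_num))
  rcases le_or_gt n 262144 with hc6 | hc6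
  · exact final_of n 6 hn σ hσ T6 hT6 (by norm_num)
      (by rw [T600]; omega) (le_trans hc6 (by norm_num))
  rcases le_or_gt n 2097152 with hc7 | hc7
  · exact final_of n 7 hn σ hσ T7 hT7 (by norm_num)
      (by rw [T700]; omega) (le_trans hc7 (by norm_num))
  rcases le_or_gt n 16777216 with hc8 | hc8
  · exact final_of n 8 hn σ hσ T8 hT8 (by norm_num)
      (by rw [T800]; omega) (le_trans hc8 (by norm_num))
  rcases le_or_gt n 134217728 with hc9 | hc9
  · exact final_of n 9 hn σ hσ T9 hT9 (by norm_num)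
      (by rw [T900]; omega) (le_trans hc9 (by norm_num))
  rcases le_or_gt n 1073741824 with hc10 | hc10
  · exact final_of n 10 hn σ hσ T10 hT10 (by norm_num)
      (by rw [T1000]; omega) (le_trans hc10 (by norm_num))
  rcases le_or_gt n 8589934592 with hc11 | hc11
  · exact final_of n 11 hn σ hσ T11 hT11 (by norm_num)
      (by rw [T1100]; omega) (le_trans hc11 (by norm_num))
  rcases le_or_gt n 68719476736 with hc12 | hc12
  · exact final_of n 12 hn σ hσ T12 hT12 (by norm_num)
      (by rw [T1200]; omega) (le_trans hc12 (by norm_num))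
  -- large case
  set B := Nat.log 8 (n - 1) + 1 with hBdef
  have hlog8 : 12 ≤ Nat.log 8 (n - 1) := by
    have : (8:ℕ) ^ 12 ≤ n - 1 := by norm_num; omega
    exact (Nat.le_log_iff_pow_le (by norm_num) (by omega)).mpr this
  have hB13 : 13 ≤ B := by omega
  have hub : n ≤ 8 ^ B := by
    have h := Nat.lt_pow_succ_log_self (show 1 < 8 by norm_num) (n - 1)
    rw [Nat.succ_eq_add_one, ← hBdef] at h
    omega
  have hlb : 8 ^ (B - 1) ≤ n - 1 := by
    have hB1 : B - 1 = Nat.log 8 (n - 1) := by omega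
    rw [hB1]
    exact Nat.pow_log_le_self 8 (show n - 1 ≠ 0 by omega)
  have hg := g_bound B (3 * B) 0 0 (by omega) (by omega)
  simp only [Nat.sub_zero, Nat.add_zero] at hg
  have h4 : (2:ℕ) ^ (B + B) = 4 ^ B := by
    rw [pow_add, ← mul_pow]
    norm_num
  have h27 : (9:ℕ) ^ B * 3 ^ B = 27 ^ B := by
    rw [← mul_pow]
    norm_num
  rw [h4, h27] at hg
  have h32 : (4:ℕ) ^ B * 8 ^ B = 32 ^ B := by rw [← mul_pow]; norm_num
  have hchain : 8 * ((g B (3 * B) 0 0 + 1) * 4 ^ B) ≤ 4 ^ B * 8 ^ B := by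
    calc 8 * ((g B (3 * B) 0 0 + 1) * 4 ^ B) ≤ 8 * 27 ^ B :=
          Nat.mul_le_mul_left 8 hg
      _ ≤ 32 ^ B := pow13 B hB13
      _ = 4 ^ B * 8 ^ B := h32.symm
  have hcancel : 8 * (g B (3 * B) 0 0 + 1) ≤ 8 ^ B := by
    apply Nat.le_of_mul_le_mul_right _ (pow_pos (show 0 < 4 by norm_num) B)
    calc (8 * (g B (3 * B) 0 0 + 1)) * 4 ^ B
        = 8 * ((g B (3 * B) 0 0 + 1) * 4 ^ B) := by ring
      _ ≤ 4 ^ B * 8 ^ B := hchain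
      _ = 8 ^ B * 4 ^ B := by ring
  have h8B : (8:ℕ) ^ B = 8 * 8 ^ (B - 1) := by
    conv_lhs => rw [show B = (B - 1) + 1 by omega]
    rw [pow_succ]
    ring
  have hgle : g B (3 * B) 0 0 + 1 ≤ 8 ^ (B - 1) := by
    rw [h8B] at hcancel
    omega
  exact final_of n B hn σ hσ (g B (3 * B)) (g_admissible B) (by omega)
    (by omega) hub


end Stmt12


/-- Against every Signgiver strategy, Positioner can query positions (in some
repetition-free order) so that at some time some prefix discrepancy is at least
`(1/3)·log₂ n`; hence `d(n) ≥ (1/3)·log₂ n`. -/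
theorem stmt_12 (n : ℕ) (hn : 2 ≤ n) (σ : SgStrategy n) (hσ : ValidStrategy σ) :
    ∃ qs : List (Fin n), qs.Nodup ∧
      ∃ j, 1 ≤ j ∧ j ≤ n ∧
        1 / 3 * Real.logb 2 n ≤ |(prefixDisc (playHist σ qs) j : ℝ)| :=
  Stmt12.stmt12 n hn σ hσ
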